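/- Let (X,d) be a metric space in which every point is an accumulation point, and let T : X → X be a continuous generalized Kannan type mapping with constant λ ∈ [0, 2/3). Then T is a Kannan type mapping with constant 3λ/4 ∈ [0, 1/2). -/
import Mathlib

theorem stmt_2 {X : Type*} [MetricSpace X] (T : X → X)
    (hacc : ∀ x : X, (nhdsWithin x {x}ᶜ).NeBot) (hcont : Continuous T)
    (l : ℝ) (hl0 : 0 ≤ l) (hl : l < 2/3)
    (hGK : ∀ x y z : X, x ≠ y → y ≠ z → x ≠ z →
      dist (T x) (T y) + dist (T y) (T z) + dist (T x) (T z) ≤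
        l * (dist x (T x) + dist y (T y) + dist z (T z))) :
    0 ≤ 3*l/4 ∧ 3*l/4 < 1/2 ∧
    ∀ x y : X, dist (T x) (T y) ≤ (3*l/4) * (dist x (T x) + dist y (T y)) := by
  have key : ∀ x y : X, x ≠ y →
      2 * dist (T x) (T y) ≤ l * (2 * dist x (T x) + dist y (T y)) := by
    intro x y hxy
    set F := nhdsWithin x ({y}ᶜ ∩ {x}ᶜ) with hFdef
    have hyc : {y}ᶜ ∈ nhdsWithin x {x}ᶜ :=
      nhdsWithin_le_nhds (isOpen_compl_singleton.mem_nhds (by simpa using hxy))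
    have hF : F = nhdsWithin x {x}ᶜ := nhdsWithin_inter_of_mem hyc
    have hNe : F.NeBot := by rw [hF]; exact hacc x
    have hle : F ≤ nhds x := by rw [hF]; exact nhdsWithin_le_nhds
    have hT : Filter.Tendsto (fun z => T z) F (nhds (T x)) :=
      (hcont.tendsto x).mono_left hle
    have hid : Filter.Tendsto (fun z => z) F (nhds x) := hle
    have hev : ∀ᶠ z in F,
        dist (T x) (T z) + dist (T z) (T y) + dist (T x) (T y) ≤
          l * (dist x (T x) + dist z (T z) + dist y (T y)) := by
      filter_upwards [self_mem_nhdsWithin] with z hz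
      obtain ⟨hzy, hzx⟩ := hz
      exact hGK x z y (fun h => hzx (h.symm)) hzy hxy
    have hlhs : Filter.Tendsto
        (fun z => dist (T x) (T z) + dist (T z) (T y) + dist (T x) (T y)) F
        (nhds (dist (T x) (T x) + dist (T x) (T y) + dist (T x) (T y))) :=
      ((Filter.Tendsto.dist tendsto_const_nhds hT).add
        (Filter.Tendsto.dist hT tendsto_const_nhds)).add tendsto_const_nhds
    have hrhs : Filter.Tendsto
        (fun z => l * (dist x (T x) + dist z (T z) + dist y (T y))) F
        (nhds (l * (dist x (T x) + dist x (T x) + dist y (T y)))) :=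
      Filter.Tendsto.const_mul _
        (((tendsto_const_nhds).add (Filter.Tendsto.dist hid hT)).add tendsto_const_nhds)
    have := le_of_tendsto_of_tendsto hlhs hrhs hev
    simp only [dist_self] at this
    nlinarith [this]
  refine ⟨by linarith, by linarith, ?_⟩
  intro x y
  by_cases hxy : x = y
  · subst hxy
    simp only [dist_self]
    positivity
  · have h1 := key x y hxy
    have h2 := key y x (Ne.symm hxy)
    rw [dist_comm (T y) (T x)] at h2
    nlinarith [h1, h2]
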